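/- Let C be a symmetric monoidal category and let (A, η_A, μ_A) and (B, η_B, μ_B) be monoid objects equipped with Frobenius data (ε_A, δ_A) and (ε_B, δ_B) respectively. Let f : A ⟶ B be a morphism of monoids (η_A ≫ f = η_B and μ_A ≫ f = (f ⊗ f) ≫ μ_B). Equip A with the self-duality datum ev_A := μ_A ≫ ε_A, coev_A := η_A ≫ δ_A, and B with ev_B := μ_B ≫ ε_B, coev_B := η_B ≫ δ_B, and let f^t : B ⟶ A denote the transpose of f with respect to these self-dualities, i.e. the composite B ≅ B ⊗ 𝟙 ⟶ B ⊗ (A ⊗ A) ⟶ B ⊗ (B ⊗ A) ≅ (B ⊗ B) ⊗ A ⟶ 𝟙 ⊗ A ≅ A built from coev_A, f, and ev_B. Then f^t is a morphism of right A-modules, where B carries the right A-action (B ◁ f) ≫ μ_B and A carries the right action μ_A; explicitly: (B ◁ f) ≫ μ_B ≫ f^t = (f^t ▷ A) ≫ μ_A. -/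

import Mathlib

open CategoryTheory MonoidalCategory

/-- The transpose `Yv ⟶ Xv` of a morphism `f : X ⟶ Y` with respect to duality data,
built from the coevaluation of `X`, `f`, and the evaluation of `Y`. -/
def transposeHom {C : Type*} [Category C] [MonoidalCategory C]
    {X Y Xv Yv : C} (f : X ⟶ Y) (evY : Yv ⊗ Y ⟶ 𝟙_ C) (coevX : 𝟙_ C ⟶ X ⊗ Xv) :
    Yv ⟶ Xv :=
  (ρ_ Yv).inv ≫ (Yv ◁ coevX) ≫ (Yv ◁ (f ▷ Xv)) ≫ (α_ Yv Y Xv).inv ≫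
    (evY ▷ Xv) ≫ (λ_ Xv).hom

/-- If `f : A ⟶ B` is a morphism of Frobenius monoids in a symmetric monoidal
category, then its transpose `f^t : B ⟶ A` (with respect to the self-dualities
`ev := μ ≫ ε`, `coev := η ≫ δ`) is a morphism of right `A`-modules, where `B`
carries the right `A`-action `(B ◁ f) ≫ μ_B` and `A` the regular right action `μ_A`. -/
theorem transpose_of_frobenius_map_is_right_module_map
    {C : Type*} [Category C] [MonoidalCategory C] [SymmetricCategory C]
    (A B : C)
    (ηA : 𝟙_ C ⟶ A) (μA : A ⊗ A ⟶ A)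
    (one_mulA : (ηA ▷ A) ≫ μA = (λ_ A).hom)
    (mul_oneA : (A ◁ ηA) ≫ μA = (ρ_ A).hom)
    (mul_assocA : (μA ▷ A) ≫ μA = (α_ A A A).hom ≫ (A ◁ μA) ≫ μA)
    (ηB : 𝟙_ C ⟶ B) (μB : B ⊗ B ⟶ B)
    (one_mulB : (ηB ▷ B) ≫ μB = (λ_ B).hom)
    (mul_oneB : (B ◁ ηB) ≫ μB = (ρ_ B).hom)
    (mul_assocB : (μB ▷ B) ≫ μB = (α_ B B B).hom ≫ (B ◁ μB) ≫ μB)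
    (εA : A ⟶ 𝟙_ C) (δA : A ⟶ A ⊗ A)
    (bimodA₁ : μA ≫ δA = (A ◁ δA) ≫ (α_ A A A).inv ≫ (μA ▷ A))
    (bimodA₂ : μA ≫ δA = (δA ▷ A) ≫ (α_ A A A).hom ≫ (A ◁ μA))
    (counitA₁ : δA ≫ (εA ▷ A) ≫ (λ_ A).hom = 𝟙 A)
    (counitA₂ : δA ≫ (A ◁ εA) ≫ (ρ_ A).hom = 𝟙 A)
    (εB : B ⟶ 𝟙_ C) (δB : B ⟶ B ⊗ B)
    (bimodB₁ : μB ≫ δB = (B ◁ δB) ≫ (α_ B B B).inv ≫ (μB ▷ B))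
    (bimodB₂ : μB ≫ δB = (δB ▷ B) ≫ (α_ B B B).hom ≫ (B ◁ μB))
    (counitB₁ : δB ≫ (εB ▷ B) ≫ (λ_ B).hom = 𝟙 B)
    (counitB₂ : δB ≫ (B ◁ εB) ≫ (ρ_ B).hom = 𝟙 B)
    (f : A ⟶ B)
    (f_one : ηA ≫ f = ηB)
    (f_mul : μA ≫ f = (f ⊗ₘ f) ≫ μB) :
    (B ◁ f) ≫ μB ≫ transposeHom f (μB ≫ εB) (ηA ≫ δA) =
      (transposeHom f (μB ≫ εB) (ηA ≫ δA) ▷ A) ≫ μA := by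
  have hT : transposeHom f (μB ≫ εB) (ηA ≫ δA) =
      (ρ_ B).inv ≫ (B ◁ (ηA ≫ δA)) ≫ (α_ B A A).inv ≫ (((B ◁ f) ≫ μB) ▷ A) ≫
        (εB ▷ A) ≫ (λ_ A).hom := by
    unfold transposeHom; monoidal
  have hδ₁ : (ρ_ A).inv ≫ (A ◁ (ηA ≫ δA)) ≫ (α_ A A A).inv ≫ (μA ▷ A) = δA := by
    rw [MonoidalCategory.whiskerLeft_comp]
    slice_lhs 3 5 => rw [← bimodA₁]
    slice_lhs 2 3 => rw [mul_oneA]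
    simp
  have hδ₂ : (λ_ A).inv ≫ ((ηA ≫ δA) ▷ A) ≫ (α_ A A A).hom ≫ (A ◁ μA) = δA := by
    rw [MonoidalCategory.comp_whiskerRight]
    slice_lhs 3 5 => rw [← bimodA₂]
    slice_lhs 2 3 => rw [one_mulA]
    simp
  have hact : (((B ◁ f) ≫ μB) ▷ A) ≫ (B ◁ f) ≫ μB =
      (α_ B A A).hom ≫ (B ◁ μA) ≫ (B ◁ f) ≫ μB := by
    calc (((B ◁ f) ≫ μB) ▷ A) ≫ (B ◁ f) ≫ μB
        = ((B ◁ f) ▷ A) ≫ ((B ⊗ B) ◁ f) ≫ (μB ▷ B) ≫ μB := by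
          rw [whisker_exchange_assoc]; monoidal
      _ = ((B ◁ f) ▷ A) ≫ ((B ⊗ B) ◁ f) ≫ (α_ B B B).hom ≫ (B ◁ μB) ≫ μB := by
          rw [mul_assocB]
      _ = (α_ B A A).hom ≫ (B ◁ ((f ▷ A) ≫ (B ◁ f) ≫ μB)) ≫ μB := by monoidal
      _ = (α_ B A A).hom ≫ (B ◁ ((f ⊗ₘ f) ≫ μB)) ≫ μB := by
          rw [tensorHom_def f f]; monoidal
      _ = (α_ B A A).hom ≫ (B ◁ (μA ≫ f)) ≫ μB := by rw [f_mul]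
      _ = (α_ B A A).hom ≫ (B ◁ μA) ≫ (B ◁ f) ≫ μB := by
          simp [MonoidalCategory.whiskerLeft_comp]
  rw [hT]
  calc (B ◁ f) ≫ μB ≫ ((ρ_ B).inv ≫ (B ◁ (ηA ≫ δA)) ≫ (α_ B A A).inv ≫
          (((B ◁ f) ≫ μB) ▷ A) ≫ (εB ▷ A) ≫ (λ_ A).hom)
      = (ρ_ (B ⊗ A)).inv ≫ ((B ⊗ A) ◁ (ηA ≫ δA)) ≫ (((B ◁ f) ≫ μB) ▷ (A ⊗ A)) ≫
          (α_ B A A).inv ≫ (((B ◁ f) ≫ μB) ▷ A) ≫ (εB ▷ A) ≫ (λ_ A).hom := by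
        rw [whisker_exchange_assoc]; monoidal
    _ = (ρ_ (B ⊗ A)).inv ≫ ((B ⊗ A) ◁ (ηA ≫ δA)) ≫ (α_ (B ⊗ A) A A).inv ≫
          (((((B ◁ f) ≫ μB) ▷ A) ≫ (B ◁ f) ≫ μB) ▷ A) ≫ (εB ▷ A) ≫ (λ_ A).hom := by
        monoidal
    _ = (ρ_ (B ⊗ A)).inv ≫ ((B ⊗ A) ◁ (ηA ≫ δA)) ≫ (α_ (B ⊗ A) A A).inv ≫
          (((α_ B A A).hom ≫ (B ◁ μA) ≫ (B ◁ f) ≫ μB) ▷ A) ≫ (εB ▷ A) ≫ (λ_ A).hom := by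
        rw [hact]
    _ = (B ◁ ((ρ_ A).inv ≫ (A ◁ (ηA ≫ δA)) ≫ (α_ A A A).inv ≫ (μA ▷ A))) ≫
          (α_ B A A).inv ≫ (((B ◁ f) ≫ μB) ▷ A) ≫ (εB ▷ A) ≫ (λ_ A).hom := by
        monoidal
    _ = (B ◁ δA) ≫ (α_ B A A).inv ≫ (((B ◁ f) ≫ μB) ▷ A) ≫ (εB ▷ A) ≫ (λ_ A).hom := by
        rw [hδ₁]
    _ = (B ◁ ((λ_ A).inv ≫ ((ηA ≫ δA) ▷ A) ≫ (α_ A A A).hom ≫ (A ◁ μA))) ≫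
          (α_ B A A).inv ≫ (((B ◁ f) ≫ μB) ▷ A) ≫ (εB ▷ A) ≫ (λ_ A).hom := by
        rw [hδ₂]
    _ = (B ◁ (λ_ A).inv) ≫ (B ◁ ((ηA ≫ δA) ▷ A)) ≫ (B ◁ (α_ A A A).hom) ≫
          (α_ B A (A ⊗ A)).inv ≫ ((B ⊗ A) ◁ μA) ≫ (((B ◁ f) ≫ μB) ▷ A) ≫
          (εB ▷ A) ≫ (λ_ A).hom := by
        monoidal
    _ = (B ◁ (λ_ A).inv) ≫ (B ◁ ((ηA ≫ δA) ▷ A)) ≫ (B ◁ (α_ A A A).hom) ≫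
          (α_ B A (A ⊗ A)).inv ≫ (((B ◁ f) ≫ μB) ▷ (A ⊗ A)) ≫ (B ◁ μA) ≫
          (εB ▷ A) ≫ (λ_ A).hom := by
        rw [whisker_exchange_assoc]
    _ = (B ◁ (λ_ A).inv) ≫ (B ◁ ((ηA ≫ δA) ▷ A)) ≫ (B ◁ (α_ A A A).hom) ≫
          (α_ B A (A ⊗ A)).inv ≫ (((B ◁ f) ≫ μB) ▷ (A ⊗ A)) ≫ (εB ▷ (A ⊗ A)) ≫
          (𝟙_ C ◁ μA) ≫ (λ_ A).hom := by
        rw [whisker_exchange_assoc]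
    _ = (((ρ_ B).inv ≫ (B ◁ (ηA ≫ δA)) ≫ (α_ B A A).inv ≫ (((B ◁ f) ≫ μB) ▷ A) ≫
          (εB ▷ A) ≫ (λ_ A).hom) ▷ A) ≫ μA := by
        monoidal
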